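/- If T is an SSYT with columns C₁,…,C_c ⊆ {1,…,n} (so for adjacent columns, the i-th smallest element of C_j is ≤ the i-th smallest element of C_{j+1} whenever both exist, and |C_j| ≥ |C_{j+1}|), then the complemented reversed family D_j = {1,…,n} \ C_{c+1−j} again satisfies the SSYT column conditions: |D_j| ≥ |D_{j+1}| and the i-th smallest element of D_j is ≤ the i-th smallest element of D_{j+1} whenever both exist. -/

import Mathlib

/-- The `i`-th smallest element (0-indexed) of a finite set of naturals. -/
def kthSmallest (s : Finset ℕ) (i : ℕ) : ℕ :=
  (s.sort (· ≤ ·)).getD i 0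

-- count of elements of s that are ≤ m
lemma count_eq (s : Finset ℕ) (m : ℕ) :
    (s.filter (· ≤ m)).card = ((s.sort (· ≤ ·)).filter (· ≤ m)).length := by
  have h1 : ((s.sort (· ≤ ·)).filter (· ≤ m)).toFinset = s.filter (· ≤ m) := by
    ext x; simp [List.mem_filter, Finset.mem_filter, decide_eq_true_iff]
  have h2 : ((s.sort (· ≤ ·)).filter (· ≤ m)).Nodup := (s.sort_nodup _).filter _
  rw [← h1, List.toFinset_card_of_nodup h2]

lemma kth_le_iff (s : Finset ℕ) (i m : ℕ) (hi : i < s.card) :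
    kthSmallest s i ≤ m ↔ i < (s.filter (· ≤ m)).card := by
  set l := s.sort (· ≤ ·) with hl
  have hlen : l.length = s.card := s.length_sort _
  have hi' : i < l.length := hlen ▸ hi
  have hsorted : l.Pairwise (· ≤ ·) := s.pairwise_sort _
  have hk : kthSmallest s i = l.get ⟨i, hi'⟩ := by
    simp [kthSmallest, ← hl, List.getD_eq_getElem?_getD, List.getElem?_eq_getElem hi']
  rw [count_eq, hk, ← hl]
  constructor
  · intro h
    have hsub : List.Sublist ((l.take (i+1)).filter (· ≤ m)) (l.filter (· ≤ m)) :=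
      (List.take_sublist _ _).filter _
    have hall : ∀ x ∈ l.take (i+1), x ≤ m := by
      intro x hx
      obtain ⟨j, hj, hxj⟩ := List.getElem_of_mem hx
      have hj' : j ≤ i := by
        rw [List.length_take] at hj
        omega
      have hjl : j < l.length := by omega
      have : x = l[j] := by rw [← hxj, List.getElem_take]
      subst this
      exact le_trans (hsorted.rel_get_of_le (by simpa using hj' : (⟨j, hjl⟩ : Fin l.length) ≤ ⟨i, hi'⟩)) h
    have : (l.take (i+1)).filter (· ≤ m) = l.take (i+1) := by
      apply List.filter_eq_self.mpr
      intro x hx; simpa using hall x hx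
    have hlt : (l.take (i+1)).length ≤ (l.filter (· ≤ m)).length := by
      rw [← this]; exact hsub.length_le
    rw [List.length_take] at hlt
    omega
  · intro h
    by_contra hc
    push_neg at hc
    -- every element ≤ m is at index < i
    have : List.Sublist (l.filter (· ≤ m)) (l.take i ++ (l.drop i).filter (· ≤ m)) := by
      conv_lhs => rw [← List.take_append_drop i l]
      rw [List.filter_append]
      exact ((List.filter_sublist).append_right _)
    have hdrop : (l.drop i).filter (· ≤ m) = [] := by
      apply List.filter_eq_nil_iff.mpr
      intro x hx
      obtain ⟨j, hj, hxj⟩ := List.getElem_of_mem hx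
      have hjl : i + j < l.length := by rw [List.length_drop] at hj; omega
      have hx' : x = l[i+j] := by rw [← hxj, List.getElem_drop]
      have : l.get ⟨i, hi'⟩ ≤ l[i+j] :=
        hsorted.rel_get_of_le (by simp : (⟨i,hi'⟩ : Fin l.length) ≤ ⟨i+j, hjl⟩)
      simp only [decide_eq_true_iff]
      omega
    rw [hdrop, List.append_nil] at this
    have h6 := this.length_le
    rw [List.length_take] at h6
    omega

-- counting domination from pointwise domination
lemma count_dom (A B : Finset ℕ) (hcard : B.card ≤ A.card)
    (h : ∀ i, i < B.card → kthSmallest A i ≤ kthSmallest B i) (m : ℕ) :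
    (B.filter (· ≤ m)).card ≤ (A.filter (· ≤ m)).card := by
  set k := (B.filter (· ≤ m)).card with hk
  rcases Nat.eq_zero_or_pos k with h0 | h0
  · omega
  have hkB : k ≤ B.card := Finset.card_le_card (Finset.filter_subset _ _)
  have h1 : k - 1 < B.card := by omega
  have h2 : kthSmallest B (k-1) ≤ m := (kth_le_iff B (k-1) m h1).mpr (by omega)
  have h3 : kthSmallest A (k-1) ≤ m := le_trans (h (k-1) h1) h2
  have h4 := (kth_le_iff A (k-1) m (lt_of_lt_of_le h1 hcard)).mp h3
  omega

lemma count_compl (n m : ℕ) (S : Finset ℕ) (hS : S ⊆ Finset.Icc 1 n) :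
    ((Finset.Icc 1 n \ S).filter (· ≤ m)).card = min n m - (S.filter (· ≤ m)).card := by
  have h1 : (Finset.Icc 1 n \ S).filter (· ≤ m)
      = (Finset.Icc 1 n).filter (· ≤ m) \ S.filter (· ≤ m) := by
    ext x
    simp only [Finset.mem_filter, Finset.mem_sdiff]
    tauto
  have h2 : S.filter (· ≤ m) ⊆ (Finset.Icc 1 n).filter (· ≤ m) :=
    Finset.filter_subset_filter _ hS
  rw [h1, Finset.card_sdiff_of_subset h2]
  congr 1
  have : (Finset.Icc 1 n).filter (· ≤ m) = Finset.Icc 1 (min n m) := by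
    ext x; simp [Finset.mem_Icc]; omega
  rw [this, Nat.card_Icc]
  omega

-- pointwise domination from counting domination
lemma kth_dom (A B : Finset ℕ)
    (h : ∀ m, (A.filter (· ≤ m)).card ≤ (B.filter (· ≤ m)).card)
    (i : ℕ) (hiA : i < A.card) (hiB : i < B.card) :
    kthSmallest B i ≤ kthSmallest A i := by
  set m := kthSmallest A i
  have h1 : i < (A.filter (· ≤ m)).card := (kth_le_iff A i m hiA).mp le_rfl
  exact (kth_le_iff B i m hiB).mpr (lt_of_lt_of_le h1 (h m))


/-- If `C 1, …, C c ⊆ {1,…,n}` satisfy the SSYT column conditions (weakly decreasing sizes,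
and the `i`-th smallest element of a column is at most the `i`-th smallest element of the
next column), then the complemented reversed family `D j = {1,…,n} \ C (c+1-j)` again
satisfies the SSYT column conditions. -/
theorem boxcomp_preserves_ssyt_columns (n c : ℕ) (C : ℕ → Finset ℕ)
    (hsub : ∀ j, 1 ≤ j → j ≤ c → C j ⊆ Finset.Icc 1 n)
    (hcard : ∀ j, 1 ≤ j → j + 1 ≤ c → (C (j + 1)).card ≤ (C j).card)
    (hcols : ∀ j i, 1 ≤ j → j + 1 ≤ c → i < (C (j + 1)).card →
      kthSmallest (C j) i ≤ kthSmallest (C (j + 1)) i) :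
    (∀ j, 1 ≤ j → j + 1 ≤ c →
      (Finset.Icc 1 n \ C (c + 1 - (j + 1))).card ≤ (Finset.Icc 1 n \ C (c + 1 - j)).card) ∧
    (∀ j i, 1 ≤ j → j + 1 ≤ c → i < (Finset.Icc 1 n \ C (c + 1 - (j + 1))).card →
      kthSmallest (Finset.Icc 1 n \ C (c + 1 - j)) i ≤
        kthSmallest (Finset.Icc 1 n \ C (c + 1 - (j + 1))) i) := by
  have key : ∀ j, 1 ≤ j → j + 1 ≤ c →
      (Finset.Icc 1 n \ C (c + 1 - (j + 1))).card ≤ (Finset.Icc 1 n \ C (c + 1 - j)).card := by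
    intro j hj hjc
    have e1 : c + 1 - (j+1) = c - j := by omega
    have e2 : c + 1 - j = (c - j) + 1 := by omega
    rw [e1, e2]
    have hA := hsub (c-j) (by omega) (by omega)
    have hB := hsub (c-j+1) (by omega) (by omega)
    have hc' := hcard (c-j) (by omega) (by omega)
    rw [Finset.card_sdiff_of_subset (by simpa using hA), Finset.card_sdiff_of_subset (by simpa using hB)]
    have := Finset.card_le_card hA
    have := Finset.card_le_card hB
    rw [Nat.card_Icc] at *
    omega
  refine ⟨key, ?_⟩
  intro j i hj hjc hi
  have e1 : c + 1 - (j+1) = c - j := by omega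
  have e2 : c + 1 - j = (c - j) + 1 := by omega
  set A := C (c - j)
  set B := C (c - j + 1)
  have hA := hsub (c-j) (by omega) (by omega)
  have hB := hsub (c-j+1) (by omega) (by omega)
  have hc' : B.card ≤ A.card := hcard (c-j) (by omega) (by omega)
  have hdom : ∀ m, ((Finset.Icc 1 n \ A).filter (· ≤ m)).card ≤
      ((Finset.Icc 1 n \ B).filter (· ≤ m)).card := by
    intro m
    rw [count_compl n m A hA, count_compl n m B hB]
    have := count_dom A B hc' (fun i hi => hcols (c-j) i (by omega) (by omega) hi) m
    have hBm : (B.filter (· ≤ m)).card ≤ min n m := by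
      have h2 : B.filter (· ≤ m) ⊆ Finset.Icc 1 (min n m) := by
        intro x hx
        simp only [Finset.mem_filter] at hx
        have := hB hx.1
        simp [Finset.mem_Icc] at *
        omega
      have := Finset.card_le_card h2
      rwa [Nat.card_Icc, Nat.add_sub_cancel] at this
    omega
  rw [e1] at hi
  rw [e1, e2]
  exact kth_dom (Finset.Icc 1 n \ A) (Finset.Icc 1 n \ B) hdom i hi
    (lt_of_lt_of_le hi (by have := key j hj hjc; rw [e1, e2] at this; exact this))
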